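/- Let n ≥ 1 be an integer, ε, c ∈ ℝ, set C := 2(n+1)ε, and let I ⊆ ℝ be an open interval. Suppose ρ : I → ℝ is twice differentiable with ρ(t) > 0 and ρ'(t) > 0 on I and satisfies 2(ρ(t)·ρ''(t) + n·ρ'(t)²) + C·ρ(t)² = 2c for all t ∈ I. Define z(t) := ρ'(t)² + ε·ρ(t)². Then z'(t) = 2c·ρ'(t)/ρ(t) − 2n·(ρ'(t)/ρ(t))·z(t) on I, and consequently there exists a constant D ∈ ℝ such that ρ'(t)² + ε·ρ(t)² = c/n + D·ρ(t)^{−2n} for all t ∈ I. -/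

import Mathlib

/-- First-order reduction of the Kähler–Einstein condition: with
`z = ρ'² + ε ρ²`, the second-order ODE `2(ρ ρ'' + n ρ'²) + C ρ² = 2c`
(where `C = 2(n+1)ε`) yields `z' = 2c ρ'/ρ - 2n (ρ'/ρ) z`, hence
`ρ'² + ε ρ² = c/n + D ρ^{-2n}` for some constant `D`. -/
theorem stmt_1 (n : ℕ) (hn : 1 ≤ n) (ε c : ℝ) (C : ℝ)
    (hC : C = 2 * ((n : ℝ) + 1) * ε)
    (I : Set ℝ) (hIopen : IsOpen I) (hIconv : Convex ℝ I)
    (ρ ρ' ρ'' : ℝ → ℝ)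
    (hρ : ∀ t ∈ I, HasDerivAt ρ (ρ' t) t)
    (hρ' : ∀ t ∈ I, HasDerivAt ρ' (ρ'' t) t)
    (hpos : ∀ t ∈ I, 0 < ρ t)
    (hpos' : ∀ t ∈ I, 0 < ρ' t)
    (hODE : ∀ t ∈ I, 2 * (ρ t * ρ'' t + (n : ℝ) * (ρ' t) ^ 2) + C * (ρ t) ^ 2 = 2 * c) :
    (∀ t ∈ I, HasDerivAt (fun t => (ρ' t) ^ 2 + ε * (ρ t) ^ 2)
      (2 * c * (ρ' t / ρ t) - 2 * (n : ℝ) * (ρ' t / ρ t) * ((ρ' t) ^ 2 + ε * (ρ t) ^ 2)) t) ∧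
    ∃ D : ℝ, ∀ t ∈ I,
      (ρ' t) ^ 2 + ε * (ρ t) ^ 2 = c / (n : ℝ) + D * (ρ t) ^ (-(2 * n : ℤ)) := by
  set z : ℝ → ℝ := fun t => (ρ' t) ^ 2 + ε * (ρ t) ^ 2 with hz
  have hzderiv : ∀ t ∈ I, HasDerivAt z
      (2 * c * (ρ' t / ρ t) - 2 * (n : ℝ) * (ρ' t / ρ t) * z t) t := by
    intro t ht
    have h1 : HasDerivAt z (2 * ρ' t * ρ'' t + ε * (2 * ρ t * ρ' t)) t := by
      have := ((hρ' t ht).pow 2).add (((hρ t ht).pow 2).const_mul ε)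
      convert this using 1
      · rfl
      · rfl
      · rfl
      · simp only [Nat.cast_ofNat, show (2:ℕ) - 1 = 1 from rfl, pow_one]
    convert h1 using 1
    have hρt := (hpos t ht).ne'
    have hODEt := hODE t ht
    subst hC
    field_simp [hz]
    linear_combination (-ρ' t / 2) * hODEt
  refine ⟨hzderiv, ?_⟩
  -- w = ρ^(2n) * (z - c/n) has zero derivative on I
  set w : ℝ → ℝ := fun t => (ρ t) ^ (2 * n) * (z t - c / n) with hw
  have hn0 : (n : ℝ) ≠ 0 := Nat.cast_ne_zero.mpr (by omega)
  have hwderiv : ∀ t ∈ I, HasDerivAt w 0 t := by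
    intro t ht
    have h1 : HasDerivAt w
        ((2 * n : ℕ) * (ρ t) ^ (2 * n - 1) * ρ' t * (z t - c / n)
          + (ρ t) ^ (2 * n) * (2 * c * (ρ' t / ρ t) - 2 * (n : ℝ) * (ρ' t / ρ t) * z t)) t := by
      exact (((hρ t ht).pow (2 * n)).mul ((hzderiv t ht).sub_const (c / n)))
    convert h1 using 1
    have hρt := (hpos t ht).ne'
    have hpow : (ρ t) ^ (2 * n) = (ρ t) ^ (2 * n - 1) * ρ t := by
      rw [← pow_succ]; congr 1; omega
    rw [hpow]
    field_simp
    push_cast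
    ring
  have hconst : ∀ x ∈ I, ∀ y ∈ I, w x = w y := by
    intro x hx y hy
    have := hIconv.norm_image_sub_le_of_norm_hasDerivWithin_le (f := w) (f' := fun _ => 0) (C := 0)
      (fun t ht => (hwderiv t ht).hasDerivWithinAt) (fun t _ => by simp) hx hy
    have h0 : ‖w y - w x‖ ≤ 0 := by simpa using this
    exact (sub_eq_zero.mp (norm_eq_zero.mp (le_antisymm h0 (norm_nonneg _)))).symm
  rcases Set.eq_empty_or_nonempty I with hI | ⟨t0, ht0⟩
  · exact ⟨0, fun t ht => absurd ht (by simp [hI])⟩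
  · refine ⟨w t0, fun t ht => ?_⟩
    have hwt : w t = w t0 := hconst t ht t0 ht0
    have hρt := (hpos t ht).ne'
    have hzpow : (ρ t) ^ (-(2 * n : ℤ)) = ((ρ t) ^ (2 * n))⁻¹ := by
      rw [zpow_neg]; norm_cast
    rw [hzpow, ← hwt, hw]
    field_simp
    ring
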